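/- Let G be a finite simple graph equipped with a type-2A, 1-planar and nice crossing structure, and let X and Y be two disjoint sets of vertices of G. Let G' be the graph obtained from G by deleting every edge xy with x ∈ X and y ∈ Y that crosses some edge both of whose endpoints lie in X. Then every vertex of Y that has a neighbour in X in the graph G also has a neighbour in X in the graph G'. -/
import Mathlib


/-- The associated edges of a crossing pair `ab`, `cd`: those of the vertex pairs
`ac`, `ad`, `bc`, `bd` that are edges of `G`. -/
def AssocEdges {V : Type*} (G : SimpleGraph V) (a b c d : V) : Set (Sym2 V) :=
  {e | e ∈ ({s(a, c), s(a, d), s(b, c), s(b, d)} : Set (Sym2 V)) ∧ e ∈ G.edgeSet}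

/-- A crossing structure on a simple graph `G`: a symmetric irreflexive relation on
unordered pairs of vertices that relates only edges of `G`, and whenever it relates
two edges, these edges have four pairwise distinct endpoints. -/
structure IsCrossingStructure {V : Type*} (G : SimpleGraph V)
    (Cross : Sym2 V → Sym2 V → Prop) : Prop where
  symm : ∀ e f, Cross e f → Cross f e
  irrefl : ∀ e, ¬ Cross e e
  edge_mem : ∀ e f, Cross e f → e ∈ G.edgeSet ∧ f ∈ G.edgeSet
  distinct : ∀ a b c d, Cross s(a, b) s(c, d) →
    a ≠ b ∧ a ≠ c ∧ a ≠ d ∧ b ≠ c ∧ b ≠ d ∧ c ≠ d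

/-- A crossing structure is type-2A if every crossing pair has at least two associated
edges, and whenever a crossing pair has exactly two associated edges, these two edges
share no endpoint (i.e. they are the pair `ac, bd` or the pair `ad, bc`). -/
def IsType2A {V : Type*} (G : SimpleGraph V) (Cross : Sym2 V → Sym2 V → Prop) : Prop :=
  ∀ a b c d, Cross s(a, b) s(c, d) →
    2 ≤ (AssocEdges G a b c d).ncard ∧
      ((AssocEdges G a b c d).ncard = 2 →
        (G.Adj a c ∧ G.Adj b d) ∨ (G.Adj a d ∧ G.Adj b c))

/-- A crossing structure is 1-planar if every edge crosses at most one other edge. -/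
def IsOnePlanar {V : Type*} (Cross : Sym2 V → Sym2 V → Prop) : Prop :=
  ∀ e f g, Cross e f → Cross e g → f = g

/-- A crossing structure is nice if no associated edge of a crossing pair crosses any edge. -/
def IsNice {V : Type*} (G : SimpleGraph V) (Cross : Sym2 V → Sym2 V → Prop) : Prop :=
  ∀ a b c d, Cross s(a, b) s(c, d) →
    ∀ e ∈ AssocEdges G a b c d, ∀ f, ¬ Cross e f

/-- An edge is crossed if it crosses some edge. -/
def IsCrossed {V : Type*} (Cross : Sym2 V → Sym2 V → Prop) (e : Sym2 V) : Prop :=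
  ∃ f, Cross e f

/-- let `G` carry a type-2A, 1-planar, nice crossing structure and let `X`, `Y`
be disjoint vertex sets. Delete from `G` every edge `xy` with `x ∈ X`, `y ∈ Y` that
crosses an edge with both endpoints in `X`. Then every vertex of `Y` having a neighbour
in `X` in `G` still has a neighbour in `X` in the resulting graph. -/
theorem statement7 {V : Type*} [Fintype V] (G : SimpleGraph V)
    (Cross : Sym2 V → Sym2 V → Prop)
    (hC : IsCrossingStructure G Cross) (h2A : IsType2A G Cross)
    (h1p : IsOnePlanar Cross) (hnice : IsNice G Cross)
    (X Y : Set V) (hXY : Disjoint X Y)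
    (G' : SimpleGraph V)
    (hG' : G' = G.deleteEdges
      {e : Sym2 V | ∃ x ∈ X, ∃ y ∈ Y, e = s(x, y) ∧ ∃ a ∈ X, ∃ b ∈ X, Cross e s(a, b)}) :
    ∀ y ∈ Y, (∃ x ∈ X, G.Adj x y) → ∃ x ∈ X, G'.Adj x y := by
  subst hG'
  rintro y hy ⟨x, hx, hxy⟩
  set S : Set (Sym2 V) :=
    {e : Sym2 V | ∃ x ∈ X, ∃ y ∈ Y, e = s(x, y) ∧ ∃ a ∈ X, ∃ b ∈ X, Cross e s(a, b)} with hS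
  by_cases hdel : s(x, y) ∈ S
  · obtain ⟨x', -, y', -, -, a, ha, b, hb, hcr⟩ := hdel
    -- From type-2A, G.Adj y a or G.Adj y b
    have key : G.Adj y a ∨ G.Adj y b := by
      by_contra h
      push_neg at h
      obtain ⟨h1, h2⟩ := h
      have hsub : AssocEdges G x y a b ⊆ {s(x, a), s(x, b)} := by
        rintro e ⟨hmem, hedge⟩
        simp only [Set.mem_insert_iff, Set.mem_singleton_iff] at hmem ⊢
        rcases hmem with h | h | h | h
        · exact Or.inl h
        · exact Or.inr h
        · exact absurd (h ▸ hedge) (by simpa using h1)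
        · exact absurd (h ▸ hedge) (by simpa using h2)
      have hle : (AssocEdges G x y a b).ncard ≤ 2 := by
        calc (AssocEdges G x y a b).ncard ≤ ({s(x, a), s(x, b)} : Set (Sym2 V)).ncard :=
              Set.ncard_le_ncard hsub ((Set.finite_singleton _).insert _)
          _ ≤ 2 := (Set.ncard_insert_le _ _).trans (by simp)
      obtain ⟨hge, hcase⟩ := h2A x y a b hcr
      rcases hcase (le_antisymm hle hge) with ⟨-, hyb⟩ | ⟨-, hya⟩
      · exact h2 hyb
      · exact h1 hya
    obtain ⟨c, hc, hyc, hcab⟩ : ∃ c ∈ X, G.Adj y c ∧ (c = a ∨ c = b) := by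
      rcases key with h | h
      · exact ⟨a, ha, h, Or.inl rfl⟩
      · exact ⟨b, hb, h, Or.inr rfl⟩
    refine ⟨c, hc, ?_⟩
    have hmem : s(y, c) ∈ AssocEdges G x y a b := by
      constructor
      · rcases hcab with rfl | rfl <;>
          simp only [Set.mem_insert_iff, Set.mem_singleton_iff] <;> tauto
      · exact G.mem_edgeSet.2 hyc
    rw [SimpleGraph.deleteEdges_adj]
    refine ⟨hyc.symm, fun hmemS => ?_⟩
    obtain ⟨-, -, -, -, -, a', -, b', -, hcr'⟩ := hmemS
    rw [Sym2.eq_swap] at hcr'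
    exact hnice x y a b hcr _ hmem _ hcr'
  · exact ⟨x, hx, (SimpleGraph.deleteEdges_adj).2 ⟨hxy, hdel⟩⟩
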